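/- If the complement D^c = Z^d \ D of the set of dissipative sites is finite, then the expected survival time of the killed random walk is finite for every starting point: Ê_x(T̂) < ∞ for all x ∈ Z^d. -/

import Mathlib

open MeasureTheory ProbabilityTheory
open scoped ENNReal

/-- The `j`-th unit step in `ℤ^d`: for `j < d` it is `+e_j`, and for `d ≤ j < 2d` it is
`-e_{j-d}`.  When `j` is uniform on `{0, …, 2d-1}`, this is a uniformly chosen nearest-neighbour
step. -/
def dirVec (d : ℕ) (j : ℕ) : Fin d → ℤ := fun i =>
  if j < d then (if (i : ℕ) = j then 1 else 0) else (if (i : ℕ) + d = j then -1 else 0)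

/-- The simple random walk on `ℤ^d` started at `x`, driven by the seed sequence `u`: at step `n`
it moves by `dirVec d (u n)`.  When the seeds are i.i.d. uniform on `{0, …, 2d-1}`, this is the
discrete-time simple random walk. -/
def srw (d : ℕ) (x : Fin d → ℤ) (u : ℕ → ℕ) : ℕ → Fin d → ℤ
  | 0 => x
  | n + 1 => srw d x u n + dirVec d (u n)

/-- The local time `l_k(z)`: the number of visits to `z` strictly before time `k`. -/
def locTime (d : ℕ) (x : Fin d → ℤ) (u : ℕ → ℕ) (k : ℕ) (z : Fin d → ℤ) : ℕ :=
  ((Finset.range k).filter (fun j => srw d x u j = z)).card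

open Classical in
/-- The product `∏_{z ∈ D} (2d/(2d+1))^{l_k(z)}`, valued in `[0,∞]`; since `l_k(z) = 0` for all
but finitely many `z`, it is the corresponding finite product over the sites of `D` visited
strictly before time `k`. -/
noncomputable def prodD (d : ℕ) (D : Set (Fin d → ℤ)) (x : Fin d → ℤ) (u : ℕ → ℕ)
    (k : ℕ) : ℝ≥0∞ :=
  ∏ z ∈ ((Finset.range k).image (fun j => srw d x u j)).filter (fun z => z ∈ D),
    (((2 * d : ℕ) : ℝ≥0∞) / ((2 * d + 1 : ℕ) : ℝ≥0∞)) ^ (locTime d x u k z)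

open Classical in
/-- The killed random walk associated to the set `D` of dissipative sites, started at `x` and
driven by the seed sequence `w`; `none` is the cemetery state.  From a site not in `D` it moves
by the uniform step `w n % (2d)`; from a site in `D`, with `r = w n % (2d+1)` it is killed if
`r = 2d` and otherwise moves by step `r`.  When the seeds are i.i.d. uniform on
`{0, …, 2d(2d+1) - 1}`, from a site in `D` the walk moves to each neighbour with probability
`1/(2d+1)` and is killed with probability `1/(2d+1)`, and from a site not in `D` it moves to each
neighbour with probability `1/(2d)`. -/
noncomputable def kwalk (d : ℕ) (D : Set (Fin d → ℤ)) (x : Fin d → ℤ) (w : ℕ → ℕ) :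
    ℕ → Option (Fin d → ℤ)
  | 0 => some x
  | n + 1 =>
    match kwalk d D x w n with
    | none => none
    | some y =>
      if y ∈ D then
        (if w n % (2 * d + 1) = 2 * d then none
         else some (y + dirVec d (w n % (2 * d + 1))))
      else some (y + dirVec d (w n % (2 * d)))

/-- The survival time `T̂` of the killed random walk: the step at which it is killed, as an
element of `[0,∞]` (it equals `∞` if the walk is never killed). -/
noncomputable def killTime (d : ℕ) (D : Set (Fin d → ℤ)) (x : Fin d → ℤ) (w : ℕ → ℕ) : ℝ≥0∞ :=
  sInf {t : ℝ≥0∞ | ∃ k : ℕ, t = (k : ℝ≥0∞) ∧ kwalk d D x w k = none}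

/-- The hitting (return) time `τ(D) = inf {k ≥ 1 : X_k ∈ D}` of the set `D` by the simple random
walk, as an element of `[0,∞]` (it equals `∞` if `D` is never hit at a positive time). -/
noncomputable def retTime (d : ℕ) (D : Set (Fin d → ℤ)) (x : Fin d → ℤ) (u : ℕ → ℕ) : ℝ≥0∞ :=
  sInf {t : ℝ≥0∞ | ∃ k : ℕ, t = (k : ℝ≥0∞) ∧ 1 ≤ k ∧ srw d x u k ∈ D}

lemma kwalk_none_of_le (d : ℕ) (D : Set (Fin d → ℤ)) (x : Fin d → ℤ) (w : ℕ → ℕ) {k m : ℕ}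
    (hkm : k ≤ m) (h : kwalk d D x w k = none) : kwalk d D x w m = none := by
  induction m, hkm using Nat.le_induction with
  | base => exact h
  | succ n hn ih => rw [kwalk, ih]

lemma kwalk_congr (d : ℕ) (D : Set (Fin d → ℤ)) (x : Fin d → ℤ) {w w' : ℕ → ℕ} (k : ℕ)
    (h : ∀ j < k, w j = w' j) : kwalk d D x w k = kwalk d D x w' k := by
  induction k with
  | zero => rfl
  | succ n ih =>
    rw [kwalk, kwalk, ih (fun j hj => h j (Nat.lt_succ_of_lt hj)), h n (Nat.lt_succ_self n)]

/-- Position after `m` forced `+e₀` steps. -/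
def qpt (d : ℕ) (y : Fin d → ℤ) (m : ℕ) : Fin d → ℤ := fun i => y i + (m : ℤ) * dirVec d 0 i

lemma qpt_zero (d : ℕ) (y : Fin d → ℤ) : qpt d y 0 = y := by
  funext i; simp [qpt]

lemma qpt_succ (d : ℕ) (y : Fin d → ℤ) (m : ℕ) :
    qpt d y (m + 1) = qpt d y m + dirVec d 0 := by
  funext i
  simp only [qpt, Pi.add_apply]
  push_cast
  ring

lemma qpt_injective (d : ℕ) (hd : 1 ≤ d) (y : Fin d → ℤ) : Function.Injective (qpt d y) := by
  intro m m' h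
  have h0 := congrFun h ⟨0, hd⟩
  have hv : dirVec d 0 ⟨0, hd⟩ = 1 := by
    show (if (0:ℕ) < d then _ else _) = (1:ℤ)
    rw [if_pos (by omega : (0:ℕ) < d)]
    simp
  simp only [qpt, hv, mul_one, add_right_inj] at h0
  exact_mod_cast h0

lemma exists_kill_target (d : ℕ) (hd : 1 ≤ d) (D : Set (Fin d → ℤ)) (hD : Dᶜ.Finite)
    (y : Fin d → ℤ) : ∃ m, m ≤ hD.toFinset.card ∧ qpt d y m ∈ D := by
  by_contra hcon
  push_neg at hcon
  have hmem : ∀ m : Fin (hD.toFinset.card + 1), qpt d y (m : ℕ) ∈ hD.toFinset := by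
    intro m
    rw [Set.Finite.mem_toFinset]
    exact hcon (m : ℕ) (Nat.lt_succ_iff.mp m.isLt)
  have := Finset.card_le_card_of_injOn (s := Finset.univ) (t := hD.toFinset)
    (fun m : Fin (hD.toFinset.card + 1) => qpt d y (m : ℕ))
    (fun m _ => hmem m) (fun a _ b _ hab => Fin.ext ((qpt_injective d hd y) hab))
  simp at this

lemma kwalk_forced (d : ℕ) (hd : 1 ≤ d) (D : Set (Fin d → ℤ)) (x : Fin d → ℤ) (w : ℕ → ℕ)
    {t M N : ℕ} {y : Fin d → ℤ} (hy : kwalk d D x w t = some y) (hM : qpt d y M ∈ D)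
    (hMN : M < N) (hw0 : ∀ i < M, w (t + i) = 0) (hwM : w (t + M) = 2 * d) :
    kwalk d D x w (t + N) = none := by
  have hsteps : ∀ m ≤ M, kwalk d D x w (t + m) = some (qpt d y m) := by
    intro m hm
    induction m with
    | zero => simpa [qpt_zero] using hy
    | succ n ih =>
      have hn : n ≤ M := Nat.le_of_succ_le hm
      have ihn := ih hn
      have hwn : w (t + n) = 0 := hw0 n (Nat.lt_of_succ_le hm)
      rw [show t + (n + 1) = (t + n) + 1 from rfl, kwalk, ihn]
      by_cases hmem : qpt d y n ∈ D
      · have h2d : (0 : ℕ) ≠ 2 * d := by omega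
        simp [hmem, hwn, Nat.zero_mod, h2d, qpt_succ]
      · simp [hmem, hwn, Nat.zero_mod, qpt_succ]
  have hkill : kwalk d D x w (t + M + 1) = none := by
    rw [kwalk, hsteps M le_rfl]
    have : (2 * d) % (2 * d + 1) = 2 * d := Nat.mod_eq_of_lt (by omega)
    simp [hM, hwM, this]
  exact kwalk_none_of_le d D x w (by omega) hkill

lemma killTime_le_tsum (d : ℕ) (D : Set (Fin d → ℤ)) (x : Fin d → ℤ) (w : ℕ → ℕ) :
    killTime d D x w ≤ ∑' m : ℕ, (if kwalk d D x w m ≠ none then (1 : ℝ≥0∞) else 0) := by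
  by_cases hex : ∃ n, kwalk d D x w n = none
  · have hfind := Nat.find_spec hex
    calc killTime d D x w ≤ ((Nat.find hex : ℕ) : ℝ≥0∞) :=
          sInf_le ⟨Nat.find hex, rfl, hfind⟩
      _ = ∑ m ∈ Finset.range (Nat.find hex),
            (if kwalk d D x w m ≠ none then (1 : ℝ≥0∞) else 0) := by
          rw [Finset.sum_congr rfl (fun m hm =>
            if_pos (Nat.find_min hex (Finset.mem_range.mp hm)))]
          simp
      _ ≤ _ := ENNReal.sum_le_tsum _
  · push_neg at hex
    have : ∑' m : ℕ, (if kwalk d D x w m ≠ none then (1 : ℝ≥0∞) else 0) = ⊤ := by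
      rw [tsum_congr (fun m => if_pos (hex m))]
      exact ENNReal.tsum_const_eq_top_of_ne_zero one_ne_zero
    rw [this]
    exact le_top
/-- If the complement `Dᶜ = ℤ^d \ D` of the set of dissipative sites is finite,
then the expected survival time of the killed random walk (encoded by i.i.d. uniform seeds `W`
on `(Ω, P)`) is finite for every starting point: `Ê_x(T̂) < ∞` for all `x ∈ ℤ^d`. -/
theorem killed_walk_expected_survival_finite_of_compl_finite (d : ℕ) (hd : 1 ≤ d)
    (D : Set (Fin d → ℤ)) (hD : Dᶜ.Finite) :
    ∀ x : Fin d → ℤ,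
      ∀ (Ω : Type) (_ : MeasurableSpace Ω) (P : Measure Ω), IsProbabilityMeasure P →
        ∀ W : ℕ → Ω → Fin (2 * d * (2 * d + 1)),
          (∀ n, Measurable (W n)) →
          iIndepFun W P →
          (∀ n j, P {ω | W n ω = j} = ((2 * d * (2 * d + 1) : ℕ) : ℝ≥0∞)⁻¹) →
          (∫⁻ ω, killTime d D x (fun m => (W m ω : ℕ)) ∂P) < ⊤ := by
  classical
  intro x Ω mΩ P hP W hW hind hunif
  haveI := hP
  have hK : 0 < 2 * d * (2 * d + 1) := Nat.mul_pos (by omega) (by omega)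
  have h2dK : 2 * d < 2 * d * (2 * d + 1) := by nlinarith
  set p : ℝ≥0∞ := ((2 * d * (2 * d + 1) : ℕ) : ℝ≥0∞)⁻¹ with hpdef
  have hset : ∀ (j : ℕ) (c : Fin (2 * d * (2 * d + 1))), {ω | W j ω = c} = W j ⁻¹' {c} := by
    intro j c; ext ω; simp [Set.mem_preimage]
  have hp_ne_top : p ≠ ⊤ := ENNReal.inv_ne_top.mpr (by exact_mod_cast hK.ne')
  have hp_le_one : p ≤ 1 := ENNReal.inv_le_one.mpr (by exact_mod_cast hK)
  have hp_ne_zero : p ≠ 0 := ENNReal.inv_ne_zero.mpr (ENNReal.natCast_ne_top _)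
  -- events
  set A : ℕ → Set Ω := fun t => {ω | kwalk d D x (fun m => (W m ω : ℕ)) t ≠ none} with hAdef
  set C : ℕ → (ℕ → Fin (2 * d * (2 * d + 1))) → Set Ω :=
    fun t u => ⋂ j ∈ Finset.range t, {ω | W j ω = u j} with hCdef
  have hCmem : ∀ t u ω, ω ∈ C t u ↔ ∀ j < t, W j ω = u j := by
    intro t u ω
    simp [hCdef]
  have hCmeas : ∀ t u, MeasurableSet (C t u) := by
    intro t u
    rw [hCdef]
    refine Finset.measurableSet_biInter _ (fun j _ => ?_)
    rw [hset]
    exact (hW j) (measurableSet_singleton (u j))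
  have hCprob : ∀ t (u : ℕ → Fin (2 * d * (2 * d + 1))), P (C t u) = p ^ t := by
    intro t u
    rw [hCdef]
    calc P (⋂ j ∈ Finset.range t, {ω | W j ω = u j})
        = ∏ j ∈ Finset.range t, P {ω | W j ω = u j} :=
          hind.meas_biInter (S := Finset.range t) (s := fun j => {ω | W j ω = u j})
            (fun j _ => ⟨{u j}, measurableSet_singleton _, (hset j (u j)).symm⟩)
      _ = p ^ t := by
          rw [Finset.prod_congr rfl (fun j _ => hunif j (u j)), Finset.prod_const,
            Finset.card_range]
  -- padded tuples
  set pad : ∀ _ : ℕ, (Fin _ → Fin (2 * d * (2 * d + 1))) → (ℕ → Fin (2 * d * (2 * d + 1))) :=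
    fun t (f : Fin t → Fin (2 * d * (2 * d + 1))) j => if h : j < t then f ⟨j, h⟩ else ⟨0, hK⟩ with hpaddef
  set SS : ℕ → Finset (ℕ → Fin (2 * d * (2 * d + 1))) := fun t => Finset.image (pad t) Finset.univ with hSSdef
  set aliveF : ℕ → Finset (ℕ → Fin (2 * d * (2 * d + 1))) :=
    fun t => (SS t).filter (fun u => kwalk d D x (fun m => (u m : ℕ)) t ≠ none) with haliveFdef
  have hA_eq : ∀ t, A t = ⋃ u ∈ aliveF t, C t u := by
    intro t
    ext ω
    simp only [hAdef, Set.mem_setOf_eq, Set.mem_iUnion, haliveFdef, Finset.mem_filter,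
      exists_prop]
    constructor
    · intro hω
      refine ⟨pad t (fun j => W (j : ℕ) ω), ⟨?_, ?_⟩, ?_⟩
      · rw [hSSdef]
        exact Finset.mem_image.mpr ⟨fun j => W (j : ℕ) ω, Finset.mem_univ _, rfl⟩
      · rw [kwalk_congr d D x t (w := fun m => ((pad t (fun j => W (j : ℕ) ω) m : ℕ)))
          (w' := fun m => (W m ω : ℕ)) (fun j hj => by
            show ((pad t (fun j => W (j : ℕ) ω) j : ℕ)) = (W j ω : ℕ)
            simp [hpaddef, hj])]
        exact hω
      · rw [hCmem]
        intro j hj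
        simp [hpaddef, hj]
    · rintro ⟨u, ⟨_, halive⟩, hωC⟩
      rw [hCmem] at hωC
      rw [kwalk_congr d D x t (w := fun m => (W m ω : ℕ)) (w' := fun m => (u m : ℕ))
        (fun j hj => by show (W j ω : ℕ) = (u j : ℕ); rw [hωC j hj])]
      exact halive
  have hdisj : ∀ t, (↑(aliveF t) : Set (ℕ → Fin (2 * d * (2 * d + 1)))).PairwiseDisjoint (C t) := by
    intro t u hu u' hu' hne
    refine Set.disjoint_left.mpr (fun ω hω hω' => hne ?_)
    rw [Finset.mem_coe, haliveFdef, Finset.mem_filter, hSSdef, Finset.mem_image] at hu hu'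
    obtain ⟨⟨f, _, hf⟩, _⟩ := hu
    obtain ⟨⟨f', _, hf'⟩, _⟩ := hu'
    rw [hCmem] at hω hω'
    funext j
    by_cases hj : j < t
    · rw [← hω j hj, ← hω' j hj]
    · rw [← hf, ← hf']
      simp [hpaddef, hj]
  have hAmeas : ∀ t, MeasurableSet (A t) := by
    intro t
    rw [hA_eq t]
    exact (aliveF t).measurableSet_biUnion (fun u _ => hCmeas t u)
  have hAprob : ∀ t, P (A t) = ((aliveF t).card : ℝ≥0∞) * p ^ t := by
    intro t
    rw [hA_eq t, measure_biUnion_finset (hdisj t) (fun u _ => hCmeas t u),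
      Finset.sum_congr rfl (fun u _ => hCprob t u), Finset.sum_const, nsmul_eq_mul]
  -- the forced kill word
  obtain ⟨M, hMle, hMD⟩ : ∃ M : (Fin d → ℤ) → ℕ,
      (∀ y, M y ≤ hD.toFinset.card) ∧ ∀ y, qpt d y (M y) ∈ D := by
    choose M h1 h2 using fun y => exists_kill_target d hd D hD y
    exact ⟨M, h1, h2⟩
  set N : ℕ := hD.toFinset.card + 1 with hNdef
  haveI : NeZero N := ⟨Nat.succ_ne_zero _⟩
  set word : (Fin d → ℤ) → ℕ → Fin (2 * d * (2 * d + 1)) :=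
    fun y i => if i < M y then (⟨0, hK⟩ : Fin (2 * d * (2 * d + 1))) else (⟨2 * d, h2dK⟩ : Fin (2 * d * (2 * d + 1))) with hworddef
  set pos : (ℕ → Fin (2 * d * (2 * d + 1))) → ℕ → (Fin d → ℤ) :=
    fun u t => (kwalk d D x (fun m => (u m : ℕ)) t).getD x with hposdef
  set ucont : ℕ → (ℕ → Fin (2 * d * (2 * d + 1))) → (ℕ → Fin (2 * d * (2 * d + 1))) :=
    fun t u j => if j < t then u j else word (pos u t) (j - t) with hucontdef
  -- the one–window step
  have hstep : ∀ t, P (A (t + N)) ≤ (1 - p ^ N) * P (A t) := by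
    intro t
    have hCsub : ∀ u, C (t + N) (ucont t u) ⊆ C t u := by
      intro u ω hω
      rw [hCmem] at hω ⊢
      intro j hj
      rw [hω j (by omega)]
      simp only [hucontdef]
      simp [hj]
    have hkillsub : ∀ u ∈ aliveF t, A (t + N) ∩ C t u ⊆ C t u \ C (t + N) (ucont t u) := by
      intro u hu ω ⟨hωA, hωC⟩
      refine ⟨hωC, fun hcon => hωA ?_⟩
      rw [haliveFdef, Finset.mem_filter] at hu
      obtain ⟨_, halive⟩ := hu
      obtain ⟨y, hy⟩ := Option.ne_none_iff_exists'.mp halive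
      have hyu : pos u t = y := by rw [hposdef]; simp [hy]
      rw [hCmem] at hωC
      rw [hCmem] at hcon
      have hyw : kwalk d D x (fun m => (W m ω : ℕ)) t = some y := by
        rw [kwalk_congr d D x t (w := fun m => (W m ω : ℕ)) (w' := fun m => (u m : ℕ))
          (fun j hj => by show (W j ω : ℕ) = (u j : ℕ); rw [hωC j hj])]
        exact hy
      have hMN : M y < N := by have := hMle y; omega
      refine kwalk_forced d hd D x _ hyw (hMD y) hMN ?_ ?_
      · intro i hi
        have h1 := hcon (t + i) (by omega)
        simp only [hucontdef] at h1
        rw [h1]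
        have hni : ¬ (t + i < t) := by omega
        rw [if_neg hni, Nat.add_sub_cancel_left, hyu]
        simp only [hworddef]
        simp [hi]
      · have h1 := hcon (t + M y) (by omega)
        simp only [hucontdef] at h1
        rw [h1]
        have hni : ¬ (t + M y < t) := by omega
        rw [if_neg hni, Nat.add_sub_cancel_left, hyu]
        simp only [hworddef]
        simp
    have hsub : A (t + N) ⊆ ⋃ u ∈ aliveF t, (C t u \ C (t + N) (ucont t u)) := by
      intro ω hω
      have hωt : ω ∈ A t := by
        intro hcon
        exact hω (kwalk_none_of_le d D x _ (Nat.le_add_right t N) hcon)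
      rw [hA_eq t] at hωt
      obtain ⟨u, hu, hωC⟩ := Set.mem_iUnion₂.mp hωt
      exact Set.mem_iUnion₂.mpr ⟨u, hu, hkillsub u hu ⟨hω, hωC⟩⟩
    have hptop : p ^ t ≠ ⊤ := ENNReal.pow_ne_top hp_ne_top
    have key : p ^ t - p ^ (t + N) = p ^ t * (1 - p ^ N) := by
      rw [ENNReal.mul_sub (fun _ _ => hptop), mul_one, ← pow_add]
    calc P (A (t + N)) ≤ ∑ u ∈ aliveF t, P (C t u \ C (t + N) (ucont t u)) :=
          (measure_mono hsub).trans (measure_biUnion_finset_le _ _)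
      _ = ∑ u ∈ aliveF t, (p ^ t - p ^ (t + N)) := by
          refine Finset.sum_congr rfl (fun u _ => ?_)
          rw [measure_diff (hCsub u) (hCmeas _ _).nullMeasurableSet
            (by rw [hCprob]; exact ENNReal.pow_ne_top hp_ne_top), hCprob, hCprob]
      _ = ((aliveF t).card : ℝ≥0∞) * (p ^ t - p ^ (t + N)) := by
          rw [Finset.sum_const, nsmul_eq_mul]
      _ = (1 - p ^ N) * (((aliveF t).card : ℝ≥0∞) * p ^ t) := by
          rw [key]; ring
      _ = (1 - p ^ N) * P (A t) := by rw [hAprob]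
  have hgeo : ∀ k, P (A (N * k)) ≤ (1 - p ^ N) ^ k := by
    intro k
    induction k with
    | zero => simpa using prob_le_one
    | succ n ih =>
      calc P (A (N * (n + 1))) = P (A (N * n + N)) := by rw [Nat.mul_succ]
        _ ≤ (1 - p ^ N) * P (A (N * n)) := hstep _
        _ ≤ (1 - p ^ N) * (1 - p ^ N) ^ n := mul_le_mul_right ih _
        _ = (1 - p ^ N) ^ (n + 1) := by rw [mul_comm]; exact (pow_succ _ n).symm
  -- assemble
  have hbound : (∫⁻ ω, killTime d D x (fun m => (W m ω : ℕ)) ∂P) ≤ ∑' m : ℕ, P (A m) := by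
    calc (∫⁻ ω, killTime d D x (fun m => (W m ω : ℕ)) ∂P)
        ≤ ∫⁻ ω, ∑' m : ℕ, (A m).indicator (fun _ => (1 : ℝ≥0∞)) ω ∂P := by
          refine lintegral_mono (fun ω => ?_)
          refine (killTime_le_tsum d D x _).trans (le_of_eq (tsum_congr fun m => ?_))
          rw [Set.indicator_apply]
          exact if_congr Iff.rfl rfl rfl
      _ = ∑' m : ℕ, ∫⁻ ω, (A m).indicator (fun _ => (1 : ℝ≥0∞)) ω ∂P :=
          lintegral_tsum (fun m => (measurable_const.indicator (hAmeas m)).aemeasurable)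
      _ = ∑' m : ℕ, P (A m) := by
          refine tsum_congr fun m => ?_
          rw [lintegral_indicator (hAmeas m)]
          simp
  have hfin : ∑' m : ℕ, P (A m) ≤ (N : ℝ≥0∞) * (p ^ N)⁻¹ := by
    have h1 : ∀ m : ℕ, P (A m) ≤ (1 - p ^ N) ^ (m / N) := by
      intro m
      have hA : A m ⊆ A (N * (m / N)) := by
        intro ω hω hcon
        exact hω (kwalk_none_of_le d D x _
          (by rw [mul_comm]; exact Nat.div_mul_le_self m N) hcon)
      exact (measure_mono hA).trans (hgeo _)
    calc ∑' m : ℕ, P (A m) ≤ ∑' m : ℕ, (1 - p ^ N) ^ (m / N) := ENNReal.tsum_le_tsum h1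
      _ = ∑' z : ℕ × Fin N, (1 - p ^ N) ^ z.1 := by
          rw [← (Nat.divModEquiv N).tsum_eq (fun z : ℕ × Fin N => (1 - p ^ N) ^ z.1)]
          exact tsum_congr fun m => by simp [Nat.divModEquiv]
      _ = ∑' k : ℕ, ∑' _ : Fin N, (1 - p ^ N) ^ k := ENNReal.tsum_prod (f := fun k (_ : Fin N) => (1 - p ^ N) ^ k)
      _ = ∑' k : ℕ, (N : ℝ≥0∞) * (1 - p ^ N) ^ k := by
          refine tsum_congr fun k => ?_
          rw [tsum_fintype, Finset.sum_const, nsmul_eq_mul]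
          simp
      _ = (N : ℝ≥0∞) * ∑' k : ℕ, (1 - p ^ N) ^ k := ENNReal.tsum_mul_left
      _ = (N : ℝ≥0∞) * (1 - (1 - p ^ N))⁻¹ := by rw [ENNReal.tsum_geometric]
      _ = (N : ℝ≥0∞) * (p ^ N)⁻¹ := by
          rw [ENNReal.sub_sub_cancel ENNReal.one_ne_top (pow_le_one' hp_le_one N)]
  refine lt_of_le_of_lt (hbound.trans hfin) ?_
  exact ENNReal.mul_lt_top (ENNReal.natCast_lt_top N)
    (ENNReal.inv_lt_top.mpr (pos_iff_ne_zero.mpr (pow_ne_zero N hp_ne_zero)))
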